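/- Let A be a real symmetric n×n matrix with n distinct eigenvalues, and let P be a permutation matrix that is an automorphism of A, i.e., P A Pᵀ = A. Then P is symmetric and P² = I; in other words, every element of the automorphism group of such a graph has order 1 or 2. -/

import Mathlib

open Matrix BigOperators

def IsPermMatrix {n : ℕ} (P : Matrix (Fin n) (Fin n) ℝ) : Prop :=
  (∀ i j, P i j = 0 ∨ P i j = 1) ∧ (∀ i, ∑ j, P i j = 1) ∧ (∀ j, ∑ i, P i j = 1)

def IsDoublyStochastic {n : ℕ} (P : Matrix (Fin n) (Fin n) ℝ) : Prop :=
  (∀ i j, 0 ≤ P i j) ∧ (∀ i, ∑ j, P i j = 1) ∧ (∀ j, ∑ i, P i j = 1)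

theorem stmt_14 {n : ℕ} (A P : Matrix (Fin n) (Fin n) ℝ)
    (hA : A.IsSymm)
    (hdist : ∃ (lam : Fin n → ℝ) (v : Fin n → Fin n → ℝ),
      Function.Injective lam ∧ ∀ i, v i ≠ 0 ∧ A *ᵥ v i = lam i • v i)
    (hP : IsPermMatrix P) (haut : P * A * Pᵀ = A) :
    Pᵀ = P ∧ P * P = 1 := by
  rcases Nat.eq_zero_or_pos n with rfl | hn
  · exact ⟨Subsingleton.elim _ _, Subsingleton.elim _ _⟩
  obtain ⟨h01, hrow, hcol⟩ := hP
  obtain ⟨lam, v, hinj, hv⟩ := hdist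
  -- P is orthogonal: Pᵀ * P = 1
  have horth : Pᵀ * P = 1 := by
    ext i j
    simp only [Matrix.mul_apply, Matrix.transpose_apply, Matrix.one_apply]
    rcases eq_or_ne i j with rfl | hij
    · simp only [if_pos rfl]
      rw [← hcol i]
      refine Finset.sum_congr rfl fun k _ => ?_
      rcases h01 k i with h | h <;> simp [h]
    · simp only [if_neg hij]
      refine Finset.sum_eq_zero fun k _ => ?_
      rcases h01 k i with h | h
      · simp [h]
      rcases h01 k j with h' | h'
      · simp [h']
      exfalso
      have h2 : (2 : ℝ) ≤ ∑ j', P k j' := by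
        calc (2:ℝ) = ∑ x ∈ ({i, j} : Finset (Fin n)), P k x := by
              rw [Finset.sum_pair hij, h, h']; norm_num
        _ ≤ ∑ j', P k j' := by
              refine Finset.sum_le_sum_of_subset_of_nonneg (Finset.subset_univ _)
                fun x _ _ => ?_
              rcases h01 k x with h'' | h'' <;> simp [h'']
      rw [hrow k] at h2; linarith
  have horth' : P * Pᵀ = 1 := mul_eq_one_comm.mp horth
  -- P commutes with A
  have hcomm : P * A = A * P := by
    have := congrArg (· * P) haut
    simpa [Matrix.mul_assoc, horth] using this
  -- eigenvectors are linearly independent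
  have heig : ∀ i, Module.End.HasEigenvector (Matrix.mulVecLin A) (lam i) (v i) := by
    intro i
    refine ⟨?_, (hv i).1⟩
    rw [Module.End.mem_eigenspace_iff]
    simpa using (hv i).2
  have hli : LinearIndependent ℝ v :=
    Module.End.eigenvectors_linearIndependent' (Matrix.mulVecLin A) lam hinj v heig
  -- they form a basis
  have : Nonempty (Fin n) := ⟨⟨0, hn⟩⟩
  let b : Module.Basis (Fin n) ℝ (Fin n → ℝ) :=
    basisOfLinearIndependentOfCardEqFinrank hli (by simp)
  have hb : ⇑b = v := coe_basisOfLinearIndependentOfCardEqFinrank hli _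
  -- ⟪Px, Px⟫ = ⟪x, x⟫
  have hnorm : ∀ x : Fin n → ℝ, (P *ᵥ x) ⬝ᵥ (P *ᵥ x) = x ⬝ᵥ x := by
    intro x
    rw [Matrix.dotProduct_mulVec, ← Matrix.vecMul_transpose, Matrix.vecMul_vecMul, horth]
    simp
  -- P *ᵥ v i is an eigenvector, hence a multiple of v i
  have hPv : ∀ i, ∃ c : ℝ, P *ᵥ v i = c • v i := by
    intro i
    have hev : A *ᵥ (P *ᵥ v i) = lam i • (P *ᵥ v i) := by
      rw [Matrix.mulVec_mulVec, ← hcomm, ← Matrix.mulVec_mulVec, (hv i).2,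
        Matrix.mulVec_smul]
    -- expand P *ᵥ v i in the basis
    set c : Fin n → ℝ := fun j => b.repr (P *ᵥ v i) j with hc
    have hexp : P *ᵥ v i = ∑ j, c j • v j := by
      conv_lhs => rw [← b.sum_repr (P *ᵥ v i)]
      simp [hb, hc]
    refine ⟨c i, ?_⟩
    have hz : ∀ j, (lam i * c j - c j * lam j) = 0 := by
      have hsum : ∑ j, (lam i * c j - c j * lam j) • v j = 0 := by
        have h1 : A *ᵥ (∑ j, c j • v j) = ∑ j, (c j * lam j) • v j := by
          rw [← Matrix.mulVecLin_apply, map_sum]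
          refine Finset.sum_congr rfl fun j _ => ?_
          rw [_root_.map_smul, Matrix.mulVecLin_apply, (hv j).2, smul_smul]
        have h2 : lam i • (P *ᵥ v i) = ∑ j, (lam i * c j) • v j := by
          rw [hexp, Finset.smul_sum]
          exact Finset.sum_congr rfl fun j _ => by rw [smul_smul]
        calc ∑ j, (lam i * c j - c j * lam j) • v j
            = ∑ j, ((lam i * c j) • v j - (c j * lam j) • v j) := by
              refine Finset.sum_congr rfl fun j _ => by rw [sub_smul]
          _ = (∑ j, (lam i * c j) • v j) - ∑ j, (c j * lam j) • v j :=
              Finset.sum_sub_distrib _ _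
          _ = 0 := by rw [← h2, ← h1, ← hexp, hev, sub_self]
      exact Fintype.linearIndependent_iff.mp hli _ hsum
    rw [hexp]
    refine (Finset.sum_eq_single i (fun j _ hj => ?_) (by simp)).trans rfl
    have := hz j
    have hlam : lam j ≠ lam i := fun h => hj (hinj h)
    have : c j * (lam i - lam j) = 0 := by ring_nf; linarith [this]
    have : c j = 0 := by
      rcases mul_eq_zero.mp this with h | h
      · exact h
      · exact absurd (sub_eq_zero.mp h).symm hlam
    simp [this]
  -- hence P² fixes each basis vector
  have hfix : ∀ i, (P * P) *ᵥ v i = v i := by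
    intro i
    obtain ⟨c, hci⟩ := hPv i
    have hc2 : c ^ 2 = 1 := by
      have h1 := hnorm (v i)
      rw [hci] at h1
      simp only [smul_dotProduct, dotProduct_smul, smul_eq_mul] at h1
      have hvv : v i ⬝ᵥ v i ≠ 0 := by
        rw [Ne, dotProduct_self_eq_zero]
        exact (hv i).1
      have : (c * c - 1) * (v i ⬝ᵥ v i) = 0 := by ring_nf; linarith [h1]
      rcases mul_eq_zero.mp this with h | h
      · nlinarith [h]
      · exact absurd h hvv
    rw [← Matrix.mulVec_mulVec, hci, Matrix.mulVec_smul, hci, smul_smul, ← sq, hc2, one_smul]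
  have hPP : P * P = 1 := by
    apply Matrix.toLin'.injective
    refine Module.Basis.ext b fun i => ?_
    rw [hb]
    simp [Matrix.toLin'_apply, hfix i]
  refine ⟨?_, hPP⟩
  calc Pᵀ = Pᵀ * (P * P) := by rw [hPP, Matrix.mul_one]
    _ = (Pᵀ * P) * P := by rw [Matrix.mul_assoc]
    _ = P := by rw [horth, Matrix.one_mul]
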